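/- For every integer n ≥ 2, ζ(n+1) − η(n) = Σ_{k=2}^∞ ((−1)^k k + 1)/k^{n+1} > 0, and moreover ζ(n+1) − η(n) > 2^{1−n} μ ζ(n+1) with μ = 65/108. -/

import Mathlib

open Filter Finset

lemma zsum (p : ℕ) (hp : 2 ≤ p) : Summable (fun k : ℕ => (1:ℝ)/((k:ℝ)+1)^p) := by
  have h := Real.summable_one_div_nat_pow.mpr (by omega : 1 < p)
  have h2 := (summable_nat_add_iff 1).mpr h
  refine h2.congr fun k => ?_
  push_cast
  ring_nf

lemma tele_hasSum (a : ℝ) (ha : 1 ≤ a) :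
    HasSum (fun k : ℕ => 1/((k:ℝ)+a)^2 - 1/((k:ℝ)+a+1)^2) (1/a^2) := by
  have ha0 : (0:ℝ) < a := lt_of_lt_of_le one_pos ha
  have hpos : ∀ k : ℕ, (0:ℝ) < (k:ℝ)+a := fun k => by positivity
  have hnn : ∀ k : ℕ, 0 ≤ 1/((k:ℝ)+a)^2 - 1/((k:ℝ)+a+1)^2 := by
    intro k
    have h1 : (0:ℝ) < ((k:ℝ)+a)^2 := by positivity
    have h2 : ((k:ℝ)+a)^2 ≤ ((k:ℝ)+a+1)^2 := by nlinarith [hpos k]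
    have := one_div_le_one_div_of_le h1 h2
    linarith
  rw [hasSum_iff_tendsto_nat_of_nonneg hnn]
  have hsum : ∀ N : ℕ, ∑ i ∈ range N, (1/((i:ℝ)+a)^2 - 1/((i:ℝ)+a+1)^2)
      = 1/a^2 - 1/((N:ℝ)+a)^2 := by
    intro N
    have h := Finset.sum_range_sub' (f := fun i : ℕ => 1/((i:ℝ)+a)^2) (n := N)
    have : ∑ i ∈ range N, (1/((i:ℝ)+a)^2 - 1/((i:ℝ)+a+1)^2)
        = ∑ i ∈ range N, ((fun i : ℕ => 1/((i:ℝ)+a)^2) i - (fun i : ℕ => 1/((i:ℝ)+a)^2) (i+1)) := by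
      refine Finset.sum_congr rfl fun i _ => ?_
      push_cast
      ring_nf
    rw [this, h]
    norm_num
  simp only [hsum]
  have h0 : Tendsto (fun N : ℕ => 1/((N:ℝ)+a)^2) atTop (nhds 0) := by
    have h1 : Tendsto (fun N : ℕ => ((N:ℝ)+a)^2) atTop atTop := by
      exact (tendsto_pow_atTop two_ne_zero).comp
        (tendsto_atTop_add_const_right _ a tendsto_natCast_atTop_atTop)
    simpa [one_div, Pi.inv_def] using h1.inv_tendsto_atTop
  simpa using tendsto_const_nhds.sub h0

lemma cube_le (x : ℝ) (hx : 1 ≤ x) : 1/(x+1)^3 ≤ (1/x^2 - 1/(x+1)^2)/2 := by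
  have hx0 : (0:ℝ) < x := by linarith
  have h1 : (0:ℝ) < x+1 := by linarith
  rw [div_sub_div _ _ (by positivity : (x:ℝ)^2 ≠ 0) (by positivity : ((x:ℝ)+1)^2 ≠ 0),
    div_div, div_le_div_iff₀ (by positivity) (by positivity)]
  nlinarith [sq_nonneg x, sq_nonneg (x+1), hx0]

lemma cube_tail (a : ℝ) (ha : 1 ≤ a) :
    Summable (fun k : ℕ => 1/((k:ℝ)+a+1)^3) ∧ ∑' k : ℕ, 1/((k:ℝ)+a+1)^3 ≤ 1/(2*a^2) := by
  have ha0 : (0:ℝ) < a := by linarith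
  have T := tele_hasSum a ha
  have hb : ∀ k : ℕ, 1/((k:ℝ)+a+1)^3 ≤ (1/((k:ℝ)+a)^2 - 1/((k:ℝ)+a+1)^2)/2 := fun k =>
    cube_le ((k:ℝ)+a) (le_add_of_nonneg_of_le (Nat.cast_nonneg k) ha)
  have hS2 : Summable (fun k : ℕ => (1/((k:ℝ)+a)^2 - 1/((k:ℝ)+a+1)^2)/2) :=
    T.summable.div_const 2
  have hs : Summable (fun k : ℕ => 1/((k:ℝ)+a+1)^3) :=
    Summable.of_nonneg_of_le (fun k => by positivity) hb hS2
  refine ⟨hs, ?_⟩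
  calc ∑' k : ℕ, 1/((k:ℝ)+a+1)^3
      ≤ ∑' k : ℕ, (1/((k:ℝ)+a)^2 - 1/((k:ℝ)+a+1)^2)/2 := Summable.tsum_le_tsum hb hs hS2
    _ = (1/a^2)/2 := (T.div_const 2).tsum_eq
    _ = 1/(2*a^2) := by ring

noncomputable def zetaR (n : ℕ) : ℝ := ∑' k : ℕ, (1 : ℝ) / (k + 1) ^ n

noncomputable def etaR (n : ℕ) : ℝ := ∑' k : ℕ, (-1 : ℝ) ^ k / (k + 1) ^ n

lemma zeta_upper (m j : ℕ) (hm : 3 ≤ m) (hj : 1 ≤ j) :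
    zetaR m ≤ (∑ i ∈ Finset.range j, (1:ℝ)/((i:ℝ)+1)^m) + 1/(2*(j:ℝ)^2) := by
  have hs : Summable (fun k : ℕ => (1:ℝ)/((k:ℝ)+1)^m) := zsum m (by omega)
  have hsplit := Summable.sum_add_tsum_nat_add (f := fun k : ℕ => (1:ℝ)/((k:ℝ)+1)^m) j hs
  have hj1 : (1:ℝ) ≤ (j:ℝ) := by exact_mod_cast hj
  have hcube := cube_tail (j:ℝ) hj1
  have hper : ∀ k : ℕ, (1:ℝ)/(((k+j:ℕ):ℝ)+1)^m ≤ 1/((k:ℝ)+(j:ℝ)+1)^3 := by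
    intro k
    have hx : (1:ℝ) ≤ (k:ℝ)+(j:ℝ)+1 := by linarith [Nat.cast_nonneg (α := ℝ) k]
    have hpow : ((k:ℝ)+(j:ℝ)+1)^3 ≤ ((k:ℝ)+(j:ℝ)+1)^m := pow_le_pow_right₀ hx hm
    calc (1:ℝ)/(((k+j:ℕ):ℝ)+1)^m = 1/((k:ℝ)+(j:ℝ)+1)^m := by push_cast; ring_nf
      _ ≤ 1/((k:ℝ)+(j:ℝ)+1)^3 := one_div_le_one_div_of_le (by positivity) hpow
  have hsumtail : Summable (fun k : ℕ => (1:ℝ)/(((k+j:ℕ):ℝ)+1)^m) :=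
    (summable_nat_add_iff (f := fun k : ℕ => (1:ℝ)/((k:ℝ)+1)^m) j).mpr hs
  have htail : (∑' k : ℕ, (1:ℝ)/(((k+j:ℕ):ℝ)+1)^m) ≤ 1/(2*(j:ℝ)^2) :=
    le_trans (Summable.tsum_le_tsum hper hsumtail hcube.1) hcube.2
  have : zetaR m = (∑ i ∈ Finset.range j, (1:ℝ)/((i:ℝ)+1)^m)
      + ∑' k : ℕ, (1:ℝ)/(((k+j:ℕ):ℝ)+1)^m := by
    rw [zetaR, ← hsplit]
  rw [this]
  linarith

lemma zeta_mono (m₁ m₂ : ℕ) (h1 : 2 ≤ m₁) (h : m₁ ≤ m₂) : zetaR m₂ ≤ zetaR m₁ := by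
  rw [zetaR, zetaR]
  refine Summable.tsum_le_tsum (fun k => ?_) (zsum m₂ (by omega)) (zsum m₁ h1)
  have hx : (1:ℝ) ≤ (k:ℝ)+1 := by linarith [Nat.cast_nonneg (α := ℝ) k]
  exact one_div_le_one_div_of_le (by positivity) (pow_le_pow_right₀ hx h)

theorem zeta_sub_eta (n : ℕ) (hn : 2 ≤ n) :
    zetaR (n + 1) - etaR n =
      (∑' k : ℕ, ((-1 : ℝ) ^ (k + 2) * (k + 2) + 1) / (k + 2 : ℝ) ^ (n + 1)) ∧
    zetaR (n + 1) - etaR n > 0 ∧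
    zetaR (n + 1) - etaR n > 2 ^ (1 - (n : ℤ)) * (65 / 108) * zetaR (n + 1) := by
  set t : ℕ → ℝ := fun k => ((-1 : ℝ) ^ (k + 2) * (k + 2) + 1) / (k + 2 : ℝ) ^ (n + 1) with ht
  have S1 : Summable (fun k : ℕ => (1:ℝ)/((k:ℝ)+1)^(n+1)) := zsum _ (by omega)
  have Sn : Summable (fun k : ℕ => (1:ℝ)/((k:ℝ)+1)^n) := zsum _ hn
  have S2 : Summable (fun k : ℕ => (-1:ℝ)^k/((k:ℝ)+1)^n) := by
    have habs : (fun k : ℕ => |(-1:ℝ)^k/((k:ℝ)+1)^n|) = fun k : ℕ => (1:ℝ)/((k:ℝ)+1)^n := by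
      funext k
      rw [abs_div, abs_pow, abs_neg, abs_one, one_pow, abs_of_nonneg (by positivity)]
    exact Summable.of_abs (habs ▸ Sn)
  have Sg : Summable (fun k : ℕ => (1:ℝ)/((k:ℝ)+1)^(n+1) - (-1:ℝ)^k/((k:ℝ)+1)^n) := S1.sub S2
  have E0 : zetaR (n+1) - etaR n
      = ∑' k : ℕ, ((1:ℝ)/((k:ℝ)+1)^(n+1) - (-1:ℝ)^k/((k:ℝ)+1)^n) := by
    rw [zetaR, etaR]
    exact (Summable.tsum_sub S1 S2).symm
  have Sg1 : Summable (fun k : ℕ =>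
      (1:ℝ)/(((k+1:ℕ):ℝ)+1)^(n+1) - (-1:ℝ)^(k+1)/(((k+1:ℕ):ℝ)+1)^n) :=
    (summable_nat_add_iff (f := fun k : ℕ => (1:ℝ)/((k:ℝ)+1)^(n+1) - (-1:ℝ)^k/((k:ℝ)+1)^n) 1).mpr Sg
  have E2 : ∀ k : ℕ,
      (1:ℝ)/(((k+1:ℕ):ℝ)+1)^(n+1) - (-1:ℝ)^(k+1)/(((k+1:ℕ):ℝ)+1)^n = t k := by
    intro k
    simp only [ht]
    have hx : ((k:ℝ)+2) ≠ 0 := by positivity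
    push_cast
    rw [show ((k:ℝ)+1+1) = ((k:ℝ)+2) by ring,
      show ((-1:ℝ))^(k+2) = (-1)^k by rw [pow_add]; norm_num,
      show ((-1:ℝ))^(k+1) = (-1)^k * (-1) by rw [pow_succ],
      pow_succ ((k:ℝ)+2) n]
    field_simp
    ring
  have St : Summable t := Sg1.congr E2
  have E1 : zetaR (n+1) - etaR n = ∑' k : ℕ, t k := by
    rw [E0, tsum_eq_zero_add' (f := fun k : ℕ => (1:ℝ)/((k:ℝ)+1)^(n+1) - (-1:ℝ)^k/((k:ℝ)+1)^n) Sg1]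
    have h0 : (1:ℝ)/(((0:ℕ):ℝ)+1)^(n+1) - (-1:ℝ)^(0:ℕ)/(((0:ℕ):ℝ)+1)^n = 0 := by
      norm_num
    rw [h0, zero_add]
    exact tsum_congr E2
  have Se : Summable (fun m : ℕ => t (2*m)) := St.comp_injective fun a b h => by omega
  have So : Summable (fun m : ℕ => t (2*m+1)) := St.comp_injective fun a b h => by omega
  set p : ℕ → ℝ := fun m => t (2*m) + t (2*m+1) with hpdef
  have Sp : Summable p := Se.add So
  have ET : ∑' k : ℕ, t k = ∑' m : ℕ, p m := by
    rw [← tsum_even_add_odd Se So]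
    exact (Summable.tsum_add Se So).symm
  have hfull : zetaR (n+1) - etaR n = ∑' m : ℕ, p m := E1.trans ET
  have hpval : ∀ m : ℕ, p m
      = (2*(m:ℝ)+3)/(2*(m:ℝ)+2)^(n+1) - (2*(m:ℝ)+2)/(2*(m:ℝ)+3)^(n+1) := by
    intro m
    simp only [hpdef, ht]
    have he : ((-1:ℝ))^(2*m+2) = 1 := by
      rw [pow_add, pow_mul]
      norm_num
    have ho : ((-1:ℝ))^(2*m+1+2) = -1 := by
      rw [show 2*m+1+2 = 2*(m+1)+1 by ring, pow_add, pow_mul]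
      norm_num
    rw [he, ho]
    push_cast
    ring
  have hpnn : ∀ m : ℕ, 0 ≤ p m := by
    intro m
    rw [hpval m]
    have h1 : (0:ℝ) < 2*(m:ℝ)+2 := by positivity
    have h2 : (0:ℝ) < 2*(m:ℝ)+3 := by positivity
    rw [sub_nonneg, div_le_div_iff₀ (by positivity) (by positivity)]
    calc (2*(m:ℝ)+2) * (2*(m:ℝ)+2)^(n+1) = (2*(m:ℝ)+2)^(n+2) := by
          rw [pow_succ (2*(m:ℝ)+2) (n+1)]; ring
      _ ≤ (2*(m:ℝ)+3)^(n+2) := pow_le_pow_left₀ h1.le (by linarith) _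
      _ = (2*(m:ℝ)+3) * (2*(m:ℝ)+3)^(n+1) := by rw [pow_succ]; ring
  have hp0 : p 0 = 3/(2:ℝ)^(n+1) - 2/(3:ℝ)^(n+1) := by
    rw [hpval 0]
    norm_num
  have hp0pos : 0 < p 0 := by
    rw [hp0, sub_pos, div_lt_div_iff₀ (by positivity) (by positivity)]
    have hle : (2:ℝ)^(n+1) ≤ 3^(n+1) := pow_le_pow_left₀ (by norm_num) (by norm_num) _
    have h2 : (0:ℝ) < (2:ℝ)^(n+1) := by positivity
    nlinarith
  have hTpos : 0 < ∑' m : ℕ, p m :=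
    lt_of_lt_of_le hp0pos (Summable.le_tsum Sp 0 fun j _ => hpnn j)
  have hzp : (2:ℝ)^(1-(n:ℤ)) = 2/(2:ℝ)^n := by
    rw [zpow_sub₀ (two_ne_zero), zpow_one, zpow_natCast]
  have hZ0 : 0 ≤ zetaR (n+1) := tsum_nonneg fun k => by positivity
  refine ⟨E1, by rw [hfull]; exact hTpos, ?_⟩
  rw [hfull, hzp]
  have hz4 : zetaR 4 ≤ 1465/1296 := by
    have h := zeta_upper 4 3 (by norm_num) (by norm_num)
    simp [Finset.sum_range_succ] at h
    norm_num at h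
    linarith
  rcases lt_or_ge n 4 with h4 | h4
  · interval_cases n
    · -- n = 2
      have hz3 : zetaR 3 ≤ 162823/135000 := by
        have h := zeta_upper 3 5 (by norm_num) (by norm_num)
        simp [Finset.sum_range_succ] at h
        norm_num at h
        linarith
      have hle : ∑ m ∈ range 4, p m ≤ ∑' m : ℕ, p m :=
        Summable.sum_le_tsum _ (fun m _ => hpnn m) Sp
      have hev : ∑ m ∈ range 4, p m
          = (3/8 - 2/27) + (5/64 - 4/125) + (7/216 - 6/343) + (9/512 - 8/729) := by
        rw [Finset.sum_range_succ, Finset.sum_range_succ, Finset.sum_range_succ,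
          Finset.sum_range_succ, Finset.sum_range_zero, hpval 0, hpval 1, hpval 2, hpval 3]
        norm_num
      rw [hev] at hle
      have hz3' : zetaR (2+1) ≤ 162823/135000 := by norm_num; linarith
      norm_num at hle ⊢
      nlinarith [hle, hz3']
    · -- n = 3
      have hle : ∑ m ∈ range 2, p m ≤ ∑' m : ℕ, p m :=
        Summable.sum_le_tsum _ (fun m _ => hpnn m) Sp
      have hev : ∑ m ∈ range 2, p m = (3/16 - 2/81) + (5/256 - 4/625) := by
        rw [Finset.sum_range_succ, Finset.sum_range_succ, Finset.sum_range_zero,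
          hpval 0, hpval 1]
        norm_num
      rw [hev] at hle
      have hz4' : zetaR (3+1) ≤ 1465/1296 := by norm_num; linarith
      norm_num at hle ⊢
      nlinarith [hle, hz4']
  · -- n ≥ 4
    have hu : ((2:ℝ)/3)^n ≤ (2/3)^4 :=
      pow_le_pow_of_le_one (by norm_num) (by norm_num) h4
    have hz : zetaR (n+1) ≤ zetaR 4 := zeta_mono 4 (n+1) (by norm_num) (by omega)
    have h2n : (0:ℝ) < 2^n := by positivity
    have h3n : (0:ℝ) < (3:ℝ)^n := by positivity
    have e1 : (3:ℝ)/2^(n+1) - 2/3^(n+1) = (3/2 - (2/3)*((2:ℝ)/3)^n)/2^n := by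
      rw [div_pow, pow_succ, pow_succ]
      field_simp
    have key : (65/54)*(1465/1296)/(2:ℝ)^n < p 0 := by
      rw [hp0, e1, div_lt_div_iff₀ h2n h2n]
      have : (2/3)*((2:ℝ)/3)^n ≤ (2/3)*(2/3)^4 := by nlinarith
      nlinarith [h2n]
    calc 2/(2:ℝ)^n * (65/108) * zetaR (n+1) = (65/54)*zetaR (n+1)/(2:ℝ)^n := by ring
      _ ≤ (65/54)*(1465/1296)/(2:ℝ)^n := by
          have : zetaR (n+1) ≤ 1465/1296 := le_trans hz hz4
          gcongr
      _ < p 0 := key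
      _ ≤ ∑' m : ℕ, p m := Summable.le_tsum Sp 0 fun j _ => hpnn j
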